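/- Fix a symmetric norm ‖·‖ on ℝⁿ with dual norm ‖·‖_*, and define ‖A‖_∂ = max{ Tr(Aᵀ ∂f) : ‖f‖_* ≤ 1 } for A ∈ Mₙ(ℝ), where (∂f)_{ij} = (fᵢ−fⱼ)/√(2n). Then for every f ∈ ℝⁿ, ‖f − E f‖ = ‖∂f‖_∂. -/

import Mathlib

open Finset

/-- The symmetric matrix `Θ_x`: off-diagonal entries `(xᵢ+xⱼ)/(2n)`, diagonal chosen
so that every row sums to zero. -/
noncomputable def Theta (n : ℕ) (x : Fin n → ℝ) : Matrix (Fin n) (Fin n) ℝ :=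
  fun i j =>
    if i = j then -(∑ k ∈ Finset.univ.erase i, (x i + x k) / (2 * n))
    else (x i + x j) / (2 * n)

/-- `I_x = Iₙ + Θ_x`. -/
noncomputable def Imat (n : ℕ) (x : Fin n → ℝ) : Matrix (Fin n) (Fin n) ℝ :=
  1 + Theta n x

/-- `E f`: the constant vector whose entries all equal the mean of `f`. -/
noncomputable def meanVec (n : ℕ) (f : Fin n → ℝ) : Fin n → ℝ :=
  fun _ => (∑ i, f i) / n

/-- The sup norm `‖x‖_∞`. -/
noncomputable def linf (n : ℕ) (x : Fin n → ℝ) : ℝ :=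
  sSup (Set.range fun i => |x i|)

/-- The Ky Fan `k`-norm: the sum of the `k` largest absolute values of the entries,
i.e. the maximum of `∑_{i ∈ S} |xᵢ|` over subsets `S` of cardinality `k`. -/
noncomputable def kyFan (n k : ℕ) (x : Fin n → ℝ) : ℝ :=
  sSup ((fun S : Finset (Fin n) => ∑ i ∈ S, |x i|) '' {S | S.card = k})

/-- The dual Ky Fan `k`-norm: `max(‖x‖_∞, ‖x‖₁ / k)`. -/
noncomputable def kyFanDual (n k : ℕ) (x : Fin n → ℝ) : ℝ :=
  max (linf n x) ((∑ i, |x i|) / k)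

/-- A symmetric norm on `ℝⁿ`: a norm invariant under coordinate permutations
and sign changes. -/
structure IsSymmNorm (n : ℕ) (N : (Fin n → ℝ) → ℝ) : Prop where
  add_le : ∀ x y, N (x + y) ≤ N x + N y
  smul : ∀ (c : ℝ) (x), N (c • x) = |c| * N x
  pos : ∀ x, x ≠ 0 → 0 < N x
  perm : ∀ (σ : Equiv.Perm (Fin n)) (x), N (x ∘ σ) = N x
  sign : ∀ (ε x : Fin n → ℝ), (∀ i, ε i = 1 ∨ ε i = -1) → N (ε * x) = N x

/-- The derivation `∂f = (f ⊗ 𝟏 − 𝟏 ⊗ f)/√(2n)`, i.e. `(∂f)_{ij} = (fᵢ − fⱼ)/√(2n)`. -/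
noncomputable def Dmat (n : ℕ) (f : Fin n → ℝ) : Matrix (Fin n) (Fin n) ℝ :=
  fun i j => (f i - f j) / Real.sqrt (2 * n)

/-- The dual norm of `N`: `‖x‖_* = sup { ⟨x, y⟩ : N y ≤ 1 }`. -/
noncomputable def dualN (n : ℕ) (N : (Fin n → ℝ) → ℝ) (x : Fin n → ℝ) : ℝ :=
  sSup {t | ∃ y, N y ≤ 1 ∧ t = ∑ i, x i * y i}

/-- The seminorm `‖A‖_∂ = max { Tr(Aᵀ ∂h) : ‖h‖_* ≤ 1 }` on `Mₙ(ℝ)`. -/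
noncomputable def dnorm (n : ℕ) (N : (Fin n → ℝ) → ℝ) (A : Matrix (Fin n) (Fin n) ℝ) : ℝ :=
  sSup {t | ∃ h, dualN n N h ≤ 1 ∧ t = ∑ i, ∑ j, A i j * Dmat n h i j}

section aux
variable {n : ℕ} {N : (Fin n → ℝ) → ℝ}

lemma symm_zero (hN : IsSymmNorm n N) : N 0 = 0 := by
  have := hN.smul 0 0
  simpa using this

lemma symm_nonneg (hN : IsSymmNorm n N) (x : Fin n → ℝ) : 0 ≤ N x := by
  rcases eq_or_ne x 0 with rfl | h
  · simp [symm_zero hN]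
  · exact (hN.pos x h).le

lemma coord_le (hN : IsSymmNorm n N) (y : Fin n → ℝ) (i : Fin n) :
    |y i| * N (Pi.single i 1) ≤ N y := by
  set ε : Fin n → ℝ := fun j => if j = i then 1 else -1 with hε
  have hεs : ∀ j, ε j = 1 ∨ ε j = -1 := by
    intro j; by_cases h : j = i <;> simp [hε, h]
  have hsum : y + ε * y = (2 * y i) • (Pi.single i 1 : Fin n → ℝ) := by
    funext j
    by_cases h : j = i <;> simp [hε, h, Pi.single_apply] <;> ring
  have h1 : N ((2 * y i) • (Pi.single i 1 : Fin n → ℝ)) ≤ 2 * N y := by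
    rw [← hsum]
    calc N (y + ε * y) ≤ N y + N (ε * y) := hN.add_le _ _
    _ = 2 * N y := by rw [hN.sign ε y hεs]; ring
  rw [hN.smul, abs_mul] at h1
  simp only [abs_two] at h1
  nlinarith [symm_nonneg hN (Pi.single i 1 : Fin n → ℝ), abs_nonneg (y i)]

lemma single_ne_zero' (i : Fin n) : (Pi.single i 1 : Fin n → ℝ) ≠ 0 := by
  intro h
  have := congrFun h i
  simp at this

lemma dualSet_bdd (hN : IsSymmNorm n N) (x : Fin n → ℝ) :
    BddAbove {t | ∃ y, N y ≤ 1 ∧ t = ∑ i, x i * y i} := by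
  refine ⟨∑ i, |x i| / N (Pi.single i 1), ?_⟩
  rintro t ⟨y, hy, rfl⟩
  apply Finset.sum_le_sum
  intro i _
  have hpos : 0 < N (Pi.single i 1) := hN.pos _ (single_ne_zero' i)
  have h := coord_le hN y i
  have hyi : |y i| ≤ 1 / N (Pi.single i 1) := by
    rw [le_div_iff₀ hpos]
    exact h.trans hy
  calc x i * y i ≤ |x i| * |y i| := by
        rw [← abs_mul]; exact le_abs_self _
    _ ≤ |x i| * (1 / N (Pi.single i 1)) :=
        mul_le_mul_of_nonneg_left hyi (abs_nonneg _)
    _ = |x i| / N (Pi.single i 1) := by ring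

lemma dualSet_nonempty (hN : IsSymmNorm n N) (x : Fin n → ℝ) :
    Set.Nonempty {t | ∃ y, N y ≤ 1 ∧ t = ∑ i, x i * y i} :=
  ⟨0, 0, by simp [symm_zero hN]⟩

lemma pairing_le (hN : IsSymmNorm n N) (x h : Fin n → ℝ) (hh : dualN n N h ≤ 1) :
    ∑ i, x i * h i ≤ N x := by
  rcases eq_or_ne x 0 with rfl | hx
  · simp [symm_zero hN]
  · have hpos := hN.pos x hx
    have hy : N ((N x)⁻¹ • x) ≤ 1 := by
      rw [hN.smul, abs_of_pos (inv_pos.2 hpos), inv_mul_cancel₀ hpos.ne']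
    have mem : (∑ i, h i * ((N x)⁻¹ • x) i) ∈
        {t | ∃ y, N y ≤ 1 ∧ t = ∑ i, h i * y i} := ⟨_, hy, rfl⟩
    have h1 : (∑ i, h i * ((N x)⁻¹ • x) i) ≤ 1 :=
      (le_csSup (dualSet_bdd hN h) mem).trans hh
    have h2 : (∑ i, h i * ((N x)⁻¹ • x) i) = (N x)⁻¹ * ∑ i, x i * h i := by
      rw [Finset.mul_sum]
      apply Finset.sum_congr rfl
      intro i _
      simp [Pi.smul_apply, smul_eq_mul]; ring
    rw [h2] at h1
    calc ∑ i, x i * h i = N x * ((N x)⁻¹ * ∑ i, x i * h i) := by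
          field_simp
      _ ≤ N x * 1 := mul_le_mul_of_nonneg_left h1 hpos.le
      _ = N x := mul_one _

lemma dualN_zero_le (hN : IsSymmNorm n N) : dualN n N 0 ≤ 1 := by
  apply csSup_le (dualSet_nonempty hN 0)
  rintro t ⟨y, hy, rfl⟩
  simp

lemma exists_dual (hN : IsSymmNorm n N) (g : Fin n → ℝ) (hg : g ≠ 0) :
    ∃ h : Fin n → ℝ, dualN n N h ≤ 1 ∧ ∑ i, g i * h i = N g := by
  obtain ⟨φ, hφ₁, hφ₂⟩ := exists_extension_of_le_sublinear
    (LinearPMap.mkSpanSingleton g (N g) hg) N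
    (fun c hc x => by rw [hN.smul, abs_of_pos hc])
    hN.add_le
    (by
      rintro ⟨x, hx⟩
      obtain ⟨c, rfl⟩ := Submodule.mem_span_singleton.1 hx
      rw [LinearPMap.mkSpanSingleton'_apply]
      rw [hN.smul, smul_eq_mul, RingHom.id_apply]
      nlinarith [le_abs_self c, (hN.pos g hg), abs_nonneg c])
  have hexp : ∀ y : Fin n → ℝ, φ y = ∑ i, (fun i => φ (Pi.single i 1)) i * y i := by
    intro y
    have : y = ∑ i, y i • (Pi.single i 1 : Fin n → ℝ) := by
      funext j
      simp [Pi.single_apply, Finset.sum_ite_eq']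
    conv_lhs => rw [this]
    rw [map_sum]
    apply Finset.sum_congr rfl
    intro i _
    rw [map_smul]; simp [mul_comm]
  refine ⟨fun i => φ (Pi.single i 1), ?_, ?_⟩
  · apply csSup_le (dualSet_nonempty hN _)
    rintro t ⟨y, hy, rfl⟩
    exact le_trans (by rw [← hexp]; exact hφ₂ y) hy
  · have hmem : g ∈ Submodule.span ℝ ({g} : Set (Fin n → ℝ)) :=
      Submodule.mem_span_singleton_self g
    have := hφ₁ ⟨g, hmem⟩
    rw [LinearPMap.mkSpanSingleton_apply] at this
    rw [← this, hexp g]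
    apply Finset.sum_congr rfl
    intro i _; ring

lemma trace_eq {n : ℕ} (hn : 0 < n) (f h : Fin n → ℝ) :
    ∑ i, ∑ j, Dmat n f i j * Dmat n h i j
      = ∑ i, (f i - (∑ k, f k) / n) * h i := by
  have hnR : (0:ℝ) < 2 * n := by positivity
  have hs : Real.sqrt (2 * n) * Real.sqrt (2 * n) = 2 * n :=
    Real.mul_self_sqrt hnR.le
  have hterm : ∀ i j, Dmat n f i j * Dmat n h i j
      = (f i - f j) * (h i - h j) / (2 * n) := by
    intro i j
    rw [Dmat, Dmat]
    rw [div_mul_div_comm, hs]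
  have key : ∑ i, ∑ j, (f i - f j) * (h i - h j)
      = 2 * n * (∑ i, f i * h i) - 2 * (∑ i, f i) * (∑ i, h i) := by
    simp only [sub_mul, mul_sub, Finset.sum_sub_distrib, ← Finset.mul_sum,
      ← Finset.sum_mul, Finset.sum_const, Finset.card_univ, Fintype.card_fin,
      nsmul_eq_mul]
    have e : ∑ x : Fin n, f x * ((n:ℝ) * h x) = (n:ℝ) * ∑ x, f x * h x := by
      rw [Finset.mul_sum]; exact Finset.sum_congr rfl fun x _ => by ring
    rw [e]; ring
  have hsum : ∑ i, ∑ j, Dmat n f i j * Dmat n h i j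
      = (∑ i, ∑ j, (f i - f j) * (h i - h j)) / (2 * n) := by
    rw [Finset.sum_div]
    apply Finset.sum_congr rfl
    intro i _
    rw [Finset.sum_div]
    exact Finset.sum_congr rfl fun j _ => hterm i j
  rw [hsum, key]
  have hn' : (n:ℝ) ≠ 0 := Nat.cast_ne_zero.2 hn.ne'
  rw [Finset.sum_congr rfl (fun i (_ : i ∈ univ) =>
    (by ring : (f i - (∑ k, f k) / n) * h i = f i * h i - ((∑ k, f k) / n) * h i))]
  rw [Finset.sum_sub_distrib, ← Finset.mul_sum]
  field_simp

end aux

/-- Proposition 3.2: `‖f − E f‖ = ‖∂f‖_∂` for every symmetric norm. -/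
theorem stmt_14 (n : ℕ) (hn : 0 < n) (N : (Fin n → ℝ) → ℝ) (hN : IsSymmNorm n N)
    (f : Fin n → ℝ) :
    N (f - meanVec n f) = dnorm n N (Dmat n f) := by
  set g := f - meanVec n f with hgdef
  have hgi : ∀ i, g i = f i - (∑ k, f k) / n := fun i => rfl
  have hset : {t | ∃ h, dualN n N h ≤ 1 ∧ t = ∑ i, ∑ j, Dmat n f i j * Dmat n h i j}
      = {t | ∃ h, dualN n N h ≤ 1 ∧ t = ∑ i, g i * h i} := by
    ext t
    constructor
    · rintro ⟨h, hh, rfl⟩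
      exact ⟨h, hh, by rw [trace_eq hn]; rfl⟩
    · rintro ⟨h, hh, rfl⟩
      exact ⟨h, hh, by rw [trace_eq hn]; rfl⟩
  rw [dnorm, hset]
  have hbdd : BddAbove {t | ∃ h, dualN n N h ≤ 1 ∧ t = ∑ i, g i * h i} :=
    ⟨N g, by rintro t ⟨h, hh, rfl⟩; exact pairing_le hN g h hh⟩
  apply le_antisymm
  · rcases eq_or_ne g 0 with hg0 | hg0
    · have hmem : (0:ℝ) ∈ {t | ∃ h, dualN n N h ≤ 1 ∧ t = ∑ i, g i * h i} :=
        ⟨0, dualN_zero_le hN, by simp⟩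
      have h0 : N g = 0 := by rw [hg0]; exact symm_zero hN
      rw [h0]
      exact le_csSup hbdd hmem
    · obtain ⟨h, hh, heq⟩ := exists_dual hN g hg0
      exact le_csSup hbdd ⟨h, hh, heq.symm⟩
  · have hmem : (0:ℝ) ∈ {t | ∃ h, dualN n N h ≤ 1 ∧ t = ∑ i, g i * h i} :=
      ⟨0, dualN_zero_le hN, by simp⟩
    apply csSup_le ⟨0, hmem⟩
    rintro t ⟨h, hh, rfl⟩
    exact pairing_le hN g h hh
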